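/- arXiv:1710.09539 — 2 statements merged into one kernel-verified Lean document; each statement's English description precedes it below -/
import Mathlib

section
/- For every n ∈ ℕ and t > 0, ∑_{j=n+1}^∞ (1 - e^{-2(jπ)² t})/(2(jπ)²) ≥ t/(2(1+2π² t)) · (1/n). -/
set_option maxHeartbeats 1000000


open Real

lemma telescope_hasSum (m : ℕ) :
    HasSum (fun j : ℕ => 1 / ((m : ℝ) + 1 + j) - 1 / ((m : ℝ) + 1 + j + 1))
      (1 / ((m : ℝ) + 1)) := by
  have hnn : ∀ j : ℕ, 0 ≤ 1 / ((m : ℝ) + 1 + j) - 1 / ((m : ℝ) + 1 + j + 1) := by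
    intro j
    have h1 : (0:ℝ) < (m : ℝ) + 1 + j := by positivity
    rw [sub_nonneg]
    exact one_div_le_one_div_of_le h1 (by linarith)
  rw [hasSum_iff_tendsto_nat_of_nonneg hnn]
  have key : ∀ N : ℕ, ∑ j ∈ Finset.range N,
      (1 / ((m : ℝ) + 1 + j) - 1 / ((m : ℝ) + 1 + j + 1))
      = 1 / ((m : ℝ) + 1) - 1 / ((m : ℝ) + 1 + N) := by
    intro N
    have := Finset.sum_range_sub' (f := fun j : ℕ => 1 / ((m : ℝ) + 1 + j)) N
    simp only [Nat.cast_zero, add_zero, Nat.cast_add, Nat.cast_one] at this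
    rw [← this]
    apply Finset.sum_congr rfl
    intro j _
    push_cast
    ring_nf
  simp only [key]
  have hb : Filter.Tendsto (fun N : ℕ => (m : ℝ) + 1 + N) Filter.atTop Filter.atTop := by
    apply Filter.tendsto_atTop_add_const_left
    exact tendsto_natCast_atTop_atTop
  have h0 : Filter.Tendsto (fun N : ℕ => 1 / ((m : ℝ) + 1 + N)) Filter.atTop (nhds 0) := by
    simp only [one_div]
    exact tendsto_inv_atTop_zero.comp hb
  have h := Filter.Tendsto.const_sub (1 / ((m : ℝ) + 1)) h0
  simpa using h

theorem stmt_1 (n : ℕ) (t : ℝ) (ht : 0 < t) :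
    (∑' j : ℕ, (1 - Real.exp (-2 * (((n : ℝ) + 1 + (j : ℝ)) * Real.pi) ^ 2 * t))
        / (2 * (((n : ℝ) + 1 + (j : ℝ)) * Real.pi) ^ 2))
      ≥ t / (2 * (1 + 2 * Real.pi ^ 2 * t)) * (1 / (n : ℝ)) := by
  set c : ℝ := t / (1 + 2 * Real.pi ^ 2 * t) with hc
  have hπ := Real.pi_pos
  have hcpos : 0 < c := by positivity
  set f : ℕ → ℝ := fun j => (1 - Real.exp (-2 * (((n : ℝ) + 1 + (j : ℝ)) * Real.pi) ^ 2 * t))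
        / (2 * (((n : ℝ) + 1 + (j : ℝ)) * Real.pi) ^ 2) with hf
  set g : ℕ → ℝ := fun j => c * (1 / ((n : ℝ) + 1 + j) - 1 / ((n : ℝ) + 1 + j + 1)) with hg
  -- pointwise bound g ≤ f
  have hfg : ∀ j : ℕ, g j ≤ f j := by
    intro j
    set k : ℝ := (n : ℝ) + 1 + j with hk
    have hk1 : (1:ℝ) ≤ k := by
      have : (0:ℝ) ≤ (n : ℝ) + (j : ℝ) := by positivity
      simp only [hk]; linarith
    have hkpos : (0:ℝ) < k := by linarith
    set x : ℝ := 2 * (k * Real.pi) ^ 2 * t with hx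
    have hxpos : 0 < x := by positivity
    -- exp(-x) ≤ 1/(1+x)
    have hexp : Real.exp (-x) ≤ 1 / (1 + x) := by
      rw [Real.exp_neg, inv_eq_one_div, div_le_div_iff₀ (Real.exp_pos x) (by positivity)]
      have := Real.add_one_le_exp x
      nlinarith
    have h1 : x / (1 + x) ≤ 1 - Real.exp (-x) := by
      have heq : 1 - 1 / (1 + x) = x / (1 + x) := by field_simp; ring
      linarith [hexp, heq.ge]
    have hfj : f j = (1 - Real.exp (-x)) / (2 * (k * Real.pi) ^ 2) := by
      simp only [hf, hx, hk]
      ring_nf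
    have hgj : g j = c * (1 / (k * (k + 1))) := by
      simp only [hg, hk]
      congr 1
      rw [div_sub_div _ _ (by positivity) (by positivity : ((n:ℝ)+1+j+1) ≠ 0)]
      congr 1
      ring
    rw [hfj, hgj]
    have step1 : (x / (1 + x)) / (2 * (k * Real.pi) ^ 2) ≤
        (1 - Real.exp (-x)) / (2 * (k * Real.pi) ^ 2) := by
      gcongr
    refine le_trans ?_ step1
    have hsimp : (x / (1 + x)) / (2 * (k * Real.pi) ^ 2) = t / (1 + x) := by
      rw [hx]; field_simp
    rw [hsimp, hc, div_mul_div_comm, mul_one,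
      div_le_div_iff₀ (by positivity) (by positivity)]
    have hx' : x = 2 * k ^ 2 * Real.pi ^ 2 * t := by rw [hx]; ring
    rw [hx']
    nlinarith [sq_nonneg Real.pi, mul_pos ht (mul_pos hπ hπ), sq_nonneg (k - 1),
      mul_pos (mul_pos ht (mul_pos hπ hπ)) hkpos]
  -- g has sum c/(n+1)
  have hgsum : HasSum g (c * (1 / ((n : ℝ) + 1))) := (telescope_hasSum n).mul_left c
  -- f is summable
  have hfnn : ∀ j, 0 ≤ f j := by
    intro j
    have h1 : Real.exp (-2 * (((n : ℝ) + 1 + (j : ℝ)) * Real.pi) ^ 2 * t) ≤ 1 := by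
      rw [Real.exp_le_one_iff]
      have h2 : (0:ℝ) < ((n : ℝ) + 1 + (j : ℝ)) * Real.pi := by positivity
      nlinarith
    have h3 : (0:ℝ) < 2 * (((n : ℝ) + 1 + (j : ℝ)) * Real.pi) ^ 2 := by positivity
    exact div_nonneg (by linarith) h3.le
  have hbound : Summable (fun j : ℕ => (1 / (2 * Real.pi ^ 2)) * (1 / ((j : ℝ) + 1) ^ 2)) := by
    apply Summable.mul_left
    have h2 := Real.summable_one_div_nat_pow.mpr (show 1 < 2 by norm_num)
    have h3 := (summable_nat_add_iff 1).mpr h2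
    exact h3.congr (fun j => by push_cast; ring)
  have hfsummable : Summable f := by
    refine Summable.of_nonneg_of_le hfnn ?_ hbound
    intro j
    have hjpos : (0:ℝ) < (j : ℝ) + 1 := by positivity
    have hkpos : (0:ℝ) < (n : ℝ) + 1 + j := by positivity
    have hkj : ((j : ℝ) + 1) ≤ (n : ℝ) + 1 + j := by
      have : (0:ℝ) ≤ (n : ℝ) := by positivity
      linarith
    have h1 : Real.exp (-2 * (((n : ℝ) + 1 + (j : ℝ)) * Real.pi) ^ 2 * t) ≤ 1 := by
      rw [Real.exp_le_one_iff]
      nlinarith [sq_nonneg (((n : ℝ) + 1 + (j : ℝ)) * Real.pi)]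
    have hexp0 := Real.exp_pos (-2 * (((n : ℝ) + 1 + (j : ℝ)) * Real.pi) ^ 2 * t)
    have hb : (1 / (2 * Real.pi ^ 2)) * (1 / ((j : ℝ) + 1) ^ 2)
        = 1 / (2 * Real.pi ^ 2 * ((j : ℝ) + 1) ^ 2) := by
      field_simp
    rw [hf, hb]
    apply div_le_div₀ (by positivity) (by linarith) (by positivity)
    have heq : (((n : ℝ) + 1 + (j : ℝ)) * Real.pi) ^ 2
        = ((n : ℝ) + 1 + (j : ℝ)) ^ 2 * Real.pi ^ 2 := by ring
    rw [heq]
    nlinarith [mul_le_mul hkj hkj hjpos.le hkpos.le, sq_nonneg Real.pi,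
      mul_pos hπ hπ]
  have hmain : c * (1 / ((n : ℝ) + 1)) ≤ ∑' j, f j :=
    hgsum.tsum_eq ▸ Summable.tsum_le_tsum hfg hgsum.summable hfsummable
  rcases Nat.eq_zero_or_pos n with hn | hn
  · subst hn
    simp only [Nat.cast_zero, div_zero, one_div, inv_zero, mul_zero, ge_iff_le]
    exact tsum_nonneg hfnn
  · have hn1 : (1:ℝ) ≤ (n : ℝ) := by exact_mod_cast hn
    refine le_trans ?_ hmain
    have heq : t / (2 * (1 + 2 * Real.pi ^ 2 * t)) * (1 / (n : ℝ)) = c / (2 * n) := by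
      rw [hc, div_mul_div_comm, mul_one, div_div]
      congr 1
      ring
    rw [heq, mul_one_div, div_le_div_iff₀ (by positivity) (by positivity)]
    nlinarith
end

section
/- Let λ > 0, T > 0, m ∈ ℕ with m ≥ 1, and partition [0,T] into intervals I_i = (t_i, t_{i+1}] of equal length T/m. For t ∈ [0,T) define Ψ^i(t) = ∫_{I_i} [∫_{I_i} (χ_{r<t} e^{-λ(t-r)} - χ_{τ<t} e^{-λ(t-τ)}) dτ]² dr. Then ∑_{i=0}^{m-1} Ψ^i(t) ≤ 8 (T/m)² (1 - e^{-λ T/m})/λ. -/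
open MeasureTheory Real Set

noncomputable def gfun (lam t : ℝ) : ℝ → ℝ :=
  (Set.Iio t).indicator fun s => Real.exp (-lam * (t - s))

lemma gfun_nonneg (lam t s : ℝ) : 0 ≤ gfun lam t s :=
  Set.indicator_nonneg (fun x _ => (Real.exp_pos _).le) s

lemma gfun_le_one (lam t s : ℝ) (hlam : 0 < lam) : gfun lam t s ≤ 1 := by
  unfold gfun
  rw [Set.indicator_apply]
  split
  · next h => exact Real.exp_le_one_iff.2 (by simp at h; nlinarith)
  · norm_num

lemma gfun_integrableOn (lam t u v : ℝ) : IntegrableOn (gfun lam t) (Set.Ioc u v) := by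
  have hc : Continuous fun s : ℝ => Real.exp (-lam * (t - s)) := by continuity
  exact (hc.integrableOn_Ioc).indicator measurableSet_Iio

lemma int_exp (lam t u v : ℝ) (hlam : 0 < lam) (huv : u ≤ v) :
    ∫ s in Set.Ioc u v, Real.exp (-lam * (t - s)) =
      (Real.exp (-lam * (t - v)) - Real.exp (-lam * (t - u))) / lam := by
  rw [← intervalIntegral.integral_of_le huv]
  have h : ∀ s : ℝ, HasDerivAt (fun s => Real.exp (-lam * (t - s)) / lam)
      (Real.exp (-lam * (t - s))) s := by
    intro s
    have h1 : HasDerivAt (fun s : ℝ => -lam * (t - s)) lam s := by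
      have := ((hasDerivAt_id s).const_sub t).const_mul (-lam)
      simpa using this
    have := (h1.exp).div_const lam
    simpa [mul_comm, mul_div_assoc, mul_div_cancel_left₀ _ hlam.ne'] using this
  rw [intervalIntegral.integral_eq_sub_of_hasDerivAt (fun s _ => h s)
      ((Real.continuous_exp.comp (by continuity)).intervalIntegrable u v)]
  ring

lemma ae_ne_pt (t : ℝ) : ∀ᵐ x : ℝ, x ≠ t := by
  have h : volume ({t} : Set ℝ) = 0 := measure_singleton t
  have := (MeasureTheory.measure_eq_zero_iff_ae_notMem (μ := volume)).1 h
  filter_upwards [this] with x hx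
  simpa using hx

lemma gfun_eq_ae (lam t u v : ℝ) (hvt : v ≤ t) :
    ∀ᵐ x : ℝ, x ∈ Set.Ioc u v → gfun lam t x = Real.exp (-lam * (t - x)) := by
  filter_upwards [ae_ne_pt t] with x hx hmem
  have hxt : x < t := lt_of_le_of_ne (hmem.2.trans hvt) hx
  simp [gfun, Set.indicator_apply, hxt]

lemma g_int_left (lam t u v : ℝ) (hlam : 0 < lam) (huv : u ≤ v) (hvt : v ≤ t) :
    ∫ x in Set.Ioc u v, gfun lam t x
      = (Real.exp (-lam * (t - v)) - Real.exp (-lam * (t - u))) / lam := by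
  rw [setIntegral_congr_ae measurableSet_Ioc (gfun_eq_ae lam t u v hvt)]
  exact int_exp lam t u v hlam huv

lemma core (u v G lo hi : ℝ) (g : ℝ → ℝ) (huv : u ≤ v)
    (hg : IntegrableOn g (Set.Ioc u v))
    (hgm : ∀ᵐ x : ℝ, x ∈ Set.Ioc u v → lo ≤ g x ∧ g x ≤ hi)
    (hlo : 0 ≤ lo)
    (hG : ∫ x in Set.Ioc u v, g x = G)
    (hGlo : (v - u) * lo ≤ G) (hGhi : G ≤ (v - u) * hi) :
    (∫ r in Set.Ioc u v, (∫ τ in Set.Ioc u v, (g r - g τ)) ^ 2)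
      ≤ 2 * (v - u)^2 * (hi - lo) * G := by
  have hδ : (0:ℝ) ≤ v - u := sub_nonneg.2 huv
  have hμ : volume (Set.Ioc u v) < ⊤ := by
    rw [Real.volume_Ioc]; exact ENNReal.ofReal_lt_top
  have hconst : ∀ c : ℝ, IntegrableOn (fun _ : ℝ => c) (Set.Ioc u v) :=
    fun c => integrableOn_const hμ.ne
  have hGnn : 0 ≤ G := le_trans (mul_nonneg hδ hlo) hGlo
  have hinner : ∀ r : ℝ, (∫ τ in Set.Ioc u v, (g r - g τ)) = (v - u) * g r - G := by
    intro r
    rw [integral_sub (hconst (g r)) hg, setIntegral_const, hG, measureReal_def, Real.volume_Ioc,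
        ENNReal.toReal_ofReal hδ, smul_eq_mul]
  simp only [hinner]
  have hb : ∀ᵐ x ∂(volume.restrict (Set.Ioc u v)),
      ((v-u) * g x - G)^2 ≤ ((v-u)*(hi-lo)) * ((v-u) * g x + G) := by
    rw [ae_restrict_iff' measurableSet_Ioc]
    filter_upwards [hgm] with x hx hmem
    obtain ⟨h1, h2⟩ := hx hmem
    have m1 : (v-u) * g x ≤ (v-u) * hi := mul_le_mul_of_nonneg_left h2 hδ
    have m2 : (v-u) * lo ≤ (v-u) * g x := mul_le_mul_of_nonneg_left h1 hδ
    have hA : (v-u)*(hi-lo) = (v-u)*hi - (v-u)*lo := by ring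
    have hgx : 0 ≤ (v-u) * g x := le_trans (mul_nonneg hδ hlo) m2
    have A1 : ((v-u) * g x - G) ≤ (v-u)*(hi-lo) := by linarith
    have A2 : -((v-u)*(hi-lo)) ≤ ((v-u) * g x - G) := by linarith
    have h₁ : (0:ℝ) ≤ ((v-u)*(hi-lo) - ((v-u)*g x - G)) * (((v-u)*g x + G) + ((v-u)*g x - G)) :=
      mul_nonneg (by linarith) (by linarith)
    have h₂ : (0:ℝ) ≤ ((v-u)*(hi-lo) + ((v-u)*g x - G)) * (((v-u)*g x + G) - ((v-u)*g x - G)) :=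
      mul_nonneg (by linarith) (by linarith)
    nlinarith [h₁, h₂]
  calc (∫ r in Set.Ioc u v, ((v-u) * g r - G)^2)
      ≤ ∫ r in Set.Ioc u v, ((v-u)*(hi-lo)) * ((v-u) * g r + G) := by
        apply integral_mono_of_nonneg
        · exact Filter.Eventually.of_forall fun x => sq_nonneg _
        · exact ((hg.const_mul _).add (hconst G)).const_mul _
        · exact hb
    _ = 2 * (v-u)^2 * (hi-lo) * G := by
        rw [integral_const_mul, integral_add (hg.const_mul _) (hconst G),
            integral_const_mul, hG, setIntegral_const, measureReal_def, Real.volume_Ioc,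
            ENNReal.toReal_ofReal hδ, smul_eq_mul]
        ring

lemma left_bound (lam t u δ : ℝ) (hlam : 0 < lam) (hδ : 0 < δ) (hvt : u + δ ≤ t) :
    (∫ r in Set.Ioc u (u+δ), (∫ τ in Set.Ioc u (u+δ), (gfun lam t r - gfun lam t τ)) ^ 2)
      ≤ 2 * δ^2 / lam * (1 - Real.exp (-lam * δ)) *
        (Real.exp (-lam * (t - (u+δ))) - Real.exp (-lam * (t - u))) := by
  set eu := Real.exp (-lam * (t - u)) with heu
  set ev := Real.exp (-lam * (t - (u+δ))) with hev
  set θ := Real.exp (-lam * δ) with hθd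
  have hθ : eu = ev * θ := by
    rw [heu, show (-lam * (t - u)) = (-lam * (t - (u+δ))) + (-lam * δ) by ring, Real.exp_add]
  have hev1 : ev ≤ 1 := Real.exp_le_one_iff.2 (by nlinarith)
  have heupos : 0 < eu := Real.exp_pos _
  have hevpos : 0 < ev := Real.exp_pos _
  have hθpos : 0 < θ := Real.exp_pos _
  have hθ1 : θ ≤ 1 := Real.exp_le_one_iff.2 (by nlinarith)
  have hle : eu ≤ ev := by nlinarith
  have huv : u ≤ u + δ := by linarith
  have hG : ∫ x in Set.Ioc u (u+δ), gfun lam t x = (ev - eu)/lam :=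
    g_int_left lam t u (u+δ) hlam huv hvt
  have hexp1 : lam * δ + 1 ≤ Real.exp (lam * δ) := Real.add_one_le_exp _
  have hθmul : θ * Real.exp (lam * δ) = 1 := by
    rw [hθd, ← Real.exp_add]; simp
  have hθle : θ * (lam * δ + 1) ≤ 1 := by nlinarith
  have hGlo : ((u+δ) - u) * eu ≤ (ev - eu)/lam := by
    rw [le_div_iff₀ hlam]
    nlinarith
  have hGhi : (ev - eu)/lam ≤ ((u+δ) - u) * ev := by
    rw [div_le_iff₀ hlam]
    have h2 : -(lam * δ) + 1 ≤ θ := by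
      rw [hθd, show -lam * δ = -(lam * δ) by ring]
      exact Real.add_one_le_exp _
    nlinarith
  have hgm : ∀ᵐ x : ℝ, x ∈ Set.Ioc u (u+δ) → eu ≤ gfun lam t x ∧ gfun lam t x ≤ ev := by
    filter_upwards [gfun_eq_ae lam t u (u+δ) hvt] with x hx hmem
    rw [hx hmem]
    exact ⟨Real.exp_le_exp.2 (by nlinarith [hmem.1]),
      Real.exp_le_exp.2 (by nlinarith [hmem.2])⟩
  have hcore := core u (u+δ) ((ev-eu)/lam) eu ev (gfun lam t) huv
    (gfun_integrableOn lam t u (u+δ)) hgm heupos.le hG hGlo hGhi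
  refine hcore.trans ?_
  have haux : ev - eu ≤ 1 - θ := by nlinarith
  have e1 : 2 * ((u+δ) - u)^2 * (ev - eu) * ((ev-eu)/lam)
      = 2 * δ^2 / lam * ((ev-eu) * (ev-eu)) := by field_simp; ring
  have e2 : 2 * δ^2 / lam * (1 - θ) * (ev - eu) = 2 * δ^2 / lam * ((1-θ) * (ev-eu)) := by ring
  rw [e1, e2]
  exact mul_le_mul_of_nonneg_left
    (mul_le_mul_of_nonneg_right haux (by linarith)) (by positivity)

lemma mid_bound (lam t u δ : ℝ) (hlam : 0 < lam) (hδ : 0 < δ) (hu : u ≤ t) (hv : t < u + δ) :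
    (∫ r in Set.Ioc u (u+δ), (∫ τ in Set.Ioc u (u+δ), (gfun lam t r - gfun lam t τ)) ^ 2)
      ≤ 2 * δ^2 / lam * (1 - Real.exp (-lam * (t - u))) := by
  set eu := Real.exp (-lam * (t - u)) with heu
  have heupos : 0 < eu := Real.exp_pos _
  have heu1 : eu ≤ 1 := Real.exp_le_one_iff.2 (by nlinarith)
  have hG : ∫ x in Set.Ioc u (u+δ), gfun lam t x = (1 - eu)/lam := by
    rw [← Set.Ioc_union_Ioc_eq_Ioc hu hv.le,
        setIntegral_union (Set.Ioc_disjoint_Ioc_of_le le_rfl) measurableSet_Ioc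
          (gfun_integrableOn lam t u t) (gfun_integrableOn lam t t (u+δ)),
        g_int_left lam t u t hlam hu le_rfl]
    have h0 : ∫ x in Set.Ioc t (u+δ), gfun lam t x = 0 := by
      rw [setIntegral_congr_fun measurableSet_Ioc
        (show Set.EqOn (gfun lam t) (fun _ => (0:ℝ)) (Set.Ioc t (u+δ)) from
          fun x hx => by simp [gfun, Set.indicator_apply, not_lt.2 hx.1.le])]
      simp
    rw [h0, add_zero, show -lam * (t - t) = 0 by ring, Real.exp_zero]
  have hGhi : (1 - eu)/lam ≤ ((u+δ) - u) * 1 := by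
    rw [div_le_iff₀ hlam]
    have h2 : -(lam * (t - u)) + 1 ≤ eu := by
      rw [heu, show -lam * (t - u) = -(lam * (t - u)) by ring]
      exact Real.add_one_le_exp _
    nlinarith
  have hgm : ∀ᵐ x : ℝ, x ∈ Set.Ioc u (u+δ) → 0 ≤ gfun lam t x ∧ gfun lam t x ≤ 1 :=
    Filter.Eventually.of_forall fun x _ => ⟨gfun_nonneg lam t x, gfun_le_one lam t x hlam⟩
  have hcore := core u (u+δ) ((1-eu)/lam) 0 1 (gfun lam t) (by linarith)
    (gfun_integrableOn lam t u (u+δ)) hgm le_rfl hG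
    (by rw [mul_zero]; exact div_nonneg (by linarith) hlam.le) hGhi
  refine hcore.trans (le_of_eq ?_)
  field_simp
  ring

set_option maxHeartbeats 1000000 in
theorem stmt_9 (lam T : ℝ) (hlam : 0 < lam) (hT : 0 < T) (m : ℕ) (hm : 1 ≤ m)
    (t : ℝ) (ht : t ∈ Set.Ico 0 T) :
    ∑ i ∈ Finset.range m,
        ∫ r in Set.Ioc ((i : ℝ) * T / m) (((i : ℝ) + 1) * T / m),
          (∫ τ in Set.Ioc ((i : ℝ) * T / m) (((i : ℝ) + 1) * T / m),
            ((if r < t then Real.exp (-lam * (t - r)) else 0)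
              - (if τ < t then Real.exp (-lam * (t - τ)) else 0))) ^ 2
      ≤ 8 * (T / m) ^ 2 * (1 - Real.exp (-lam * T / m)) / lam := by
  obtain ⟨ht0, htT⟩ := ht
  have hm' : (0:ℝ) < m := by exact_mod_cast Nat.pos_of_ne_zero (by omega)
  set δ : ℝ := T / m with hδdef
  have hδ : 0 < δ := div_pos hT hm'
  have hmδ : (m:ℝ) * δ = T := by rw [hδdef]; field_simp
  set θ : ℝ := Real.exp (-lam * δ) with hθd
  have hθ1 : θ ≤ 1 := Real.exp_le_one_iff.2 (by nlinarith)
  set c : ℝ := 2 * δ^2 / lam * (1 - θ) with hcd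
  have hc : 0 ≤ c := by
    apply mul_nonneg (by positivity) (by linarith)
  set k : ℕ := ⌊t / δ⌋₊ with hk
  have htδ : 0 ≤ t / δ := div_nonneg ht0 hδ.le
  have hk2 : t < ((k:ℝ) + 1) * δ := by
    have h := Nat.lt_floor_add_one (t/δ)
    calc t = (t/δ) * δ := by field_simp
      _ < ((k:ℝ)+1) * δ := by apply mul_lt_mul_of_pos_right _ hδ; exact_mod_cast h
  have hkm : k < m := by
    rw [hk, Nat.floor_lt htδ, div_lt_iff₀ hδ]
    nlinarith
  set F : ℕ → ℝ := fun i => Real.exp (-lam * (t - min ((i:ℝ)*δ) t)) with hF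
  have hFmono : ∀ i : ℕ, F i ≤ F (i+1) := by
    intro i
    apply Real.exp_le_exp.2
    have h : min ((i:ℝ)*δ) t ≤ min (((i+1:ℕ):ℝ)*δ) t := by
      apply min_le_min _ le_rfl
      push_cast
      nlinarith
    nlinarith
  have hgf : ∀ s : ℝ, (if s < t then Real.exp (-lam * (t - s)) else 0) = gfun lam t s := by
    intro s
    simp [gfun, Set.indicator_apply]
  have key : ∀ i ∈ Finset.range m,
      (∫ r in Set.Ioc ((i : ℝ) * T / m) (((i : ℝ) + 1) * T / m),
          (∫ τ in Set.Ioc ((i : ℝ) * T / m) (((i : ℝ) + 1) * T / m),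
            ((if r < t then Real.exp (-lam * (t - r)) else 0)
              - (if τ < t then Real.exp (-lam * (t - τ)) else 0))) ^ 2)
        ≤ c * (if i = k then 1 else F (i+1) - F i) := by
    intro i _
    have e1 : (i:ℝ) * T / m = (i:ℝ) * δ := by rw [hδdef, mul_div_assoc]
    have e2 : ((i:ℝ) + 1) * T / m = (i:ℝ) * δ + δ := by rw [hδdef]; ring
    simp only [hgf, e1, e2]
    rcases le_or_gt ((i:ℝ) * δ + δ) t with hc1 | hgt
    · -- left interval
      have hik : i ≠ k := by
        intro h
        rw [h] at hc1
        nlinarith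
      rw [if_neg hik]
      have hmin1 : min (((i+1:ℕ):ℝ)*δ) t = (i:ℝ)*δ + δ := by
        push_cast
        rw [min_eq_left (by nlinarith)]
        ring
      have hmin2 : min ((i:ℝ)*δ) t = (i:ℝ)*δ := min_eq_left (by nlinarith)
      have hFF : F (i+1) - F i
          = Real.exp (-lam * (t - ((i:ℝ)*δ + δ))) - Real.exp (-lam * (t - (i:ℝ)*δ)) := by
        rw [hF]
        simp only [hmin1, hmin2]
      rw [hFF]
      exact left_bound lam t ((i:ℝ)*δ) δ hlam hδ hc1
    rcases le_or_gt t ((i:ℝ) * δ) with hc2 | hgt2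
    · -- right interval : integral is zero
      have hz : ∀ r ∈ Set.Ioc ((i:ℝ)*δ) ((i:ℝ)*δ + δ), gfun lam t r = 0 := by
        intro r hr
        have : ¬ r < t := not_lt.2 (le_trans hc2 hr.1.le)
        simp [gfun, Set.indicator_apply, this]
      have hzero : (∫ r in Set.Ioc ((i:ℝ)*δ) ((i:ℝ)*δ + δ),
          (∫ τ in Set.Ioc ((i:ℝ)*δ) ((i:ℝ)*δ + δ), (gfun lam t r - gfun lam t τ)) ^ 2) = 0 := by
        rw [setIntegral_congr_fun measurableSet_Ioc
          (show Set.EqOn (fun r => (∫ τ in Set.Ioc ((i:ℝ)*δ) ((i:ℝ)*δ + δ),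
              (gfun lam t r - gfun lam t τ)) ^ 2) (fun _ => (0:ℝ))
              (Set.Ioc ((i:ℝ)*δ) ((i:ℝ)*δ + δ)) from ?_)]
        · simp
        intro r hr
        have hinner : (∫ τ in Set.Ioc ((i:ℝ)*δ) ((i:ℝ)*δ + δ),
            (gfun lam t r - gfun lam t τ)) = 0 := by
          rw [setIntegral_congr_fun measurableSet_Ioc
            (show Set.EqOn (fun τ => gfun lam t r - gfun lam t τ) (fun _ => (0:ℝ))
                (Set.Ioc ((i:ℝ)*δ) ((i:ℝ)*δ + δ)) from fun τ hτ => by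
              simp [hz r hr, hz τ hτ])]
          simp
        simp [hinner]
      rw [hzero]
      apply mul_nonneg hc
      split
      · norm_num
      · linarith [hFmono i]
    · -- middle interval
      have hik : i = k := by
        rw [hk]
        symm
        rw [Nat.floor_eq_iff htδ]
        have e : ((i:ℝ)+1)*δ = (i:ℝ)*δ + δ := by ring
        constructor
        · rw [le_div_iff₀ hδ]; linarith
        · rw [div_lt_iff₀ hδ]; push_cast; linarith
      rw [if_pos hik]
      have hmb := mid_bound lam t ((i:ℝ)*δ) δ hlam hδ hgt2.le hgt
      refine hmb.trans ?_
      rw [hcd, mul_one]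
      apply mul_le_mul_of_nonneg_left _ (by positivity)
      have : θ ≤ Real.exp (-lam * (t - (i:ℝ)*δ)) := by
        rw [hθd]
        apply Real.exp_le_exp.2
        nlinarith
      linarith
  refine le_trans (Finset.sum_le_sum key) ?_
  have hsum : ∑ i ∈ Finset.range m, c * (if i = k then 1 else F (i+1) - F i)
      ≤ c * 2 := by
    rw [← Finset.mul_sum]
    apply mul_le_mul_of_nonneg_left _ hc
    have step : ∑ i ∈ Finset.range m, (if i = k then (1:ℝ) else F (i+1) - F i)
        ≤ ∑ i ∈ Finset.range m, ((F (i+1) - F i) + (if i = k then (1:ℝ) else 0)) := by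
      apply Finset.sum_le_sum
      intro i _
      by_cases h : i = k
      · rw [if_pos h, if_pos h]
        linarith [hFmono i]
      · rw [if_neg h, if_neg h]
        linarith
    refine step.trans ?_
    rw [Finset.sum_add_distrib, Finset.sum_range_sub, Finset.sum_ite_eq' (Finset.range m) k,
        if_pos (Finset.mem_range.2 hkm)]
    have hFm : F m ≤ 1 := Real.exp_le_one_iff.2 (by
      have := min_le_right ((m:ℝ)*δ) t
      nlinarith)
    have hF0 : 0 < F 0 := Real.exp_pos _
    linarith
  refine hsum.trans ?_
  have harg : Real.exp (-lam * T / m) = θ := by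
    rw [hθd, hδdef]
    congr 1
    ring
  rw [harg]
  have hX : 0 ≤ δ^2 * (1 - θ) / lam := by
    apply div_nonneg (mul_nonneg (sq_nonneg _) (by linarith)) hlam.le
  have hc2' : c * 2 = 4 * (δ^2 * (1-θ)/lam) := by rw [hcd]; ring
  have hr8 : 8 * (T/m)^2 * (1 - θ) / lam = 8 * (δ^2 * (1-θ)/lam) := by
    rw [hδdef]; ring
  rw [hc2', hr8]
  linarith
end
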